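/- Let u, v, w be three nonzero vectors of ℝ⁴ which are null for the Minkowski form η, i.e. η(u,u) = η(v,v) = η(w,w) = 0. Then the set {u, v, w} is linearly dependent over ℝ if and only if two of the three vectors are proportional (scalar multiples of each other). In particular, three pairwise non-proportional null vectors are linearly independent. -/

import Mathlib

/-- The Minkowski form of signature (+,−,−,−) on ℝ⁴. -/
def minkowski (u v : Fin 4 → ℝ) : ℝ :=
  u 0 * v 0 - u 1 * v 1 - u 2 * v 2 - u 3 * v 3

/-- Two null vectors that are Minkowski-orthogonal are proportional. -/
lemma null_orth (x y : Fin 4 → ℝ) (hx : x ≠ 0)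
    (hxx : minkowski x x = 0) (hyy : minkowski y y = 0) (hxy : minkowski x y = 0) :
    ∃ t : ℝ, y = t • x := by
  simp only [minkowski] at hxx hyy hxy
  have hx0 : x 0 ≠ 0 := by
    intro h0
    apply hx
    have h1 : x 1 = 0 := by nlinarith [sq_nonneg (x 1), sq_nonneg (x 2), sq_nonneg (x 3)]
    have h2 : x 2 = 0 := by nlinarith [sq_nonneg (x 1), sq_nonneg (x 2), sq_nonneg (x 3)]
    have h3 : x 3 = 0 := by nlinarith [sq_nonneg (x 1), sq_nonneg (x 2), sq_nonneg (x 3)]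
    funext i
    fin_cases i <;> simp [h0, h1, h2, h3]
  have hSx : x 1 * x 1 + x 2 * x 2 + x 3 * x 3 = x 0 * x 0 := by linarith
  have hSy : y 1 * y 1 + y 2 * y 2 + y 3 * y 3 = y 0 * y 0 := by linarith
  have hdot : x 1 * y 1 + x 2 * y 2 + x 3 * y 3 = x 0 * y 0 := by linarith
  have hsum : (x 1 * y 2 - x 2 * y 1)^2 + (x 1 * y 3 - x 3 * y 1)^2
      + (x 2 * y 3 - x 3 * y 2)^2 = 0 := by
    linear_combination (y 1 * y 1 + y 2 * y 2 + y 3 * y 3) * hSx + (x 0 * x 0) * hSy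
      - (x 1 * y 1 + x 2 * y 2 + x 3 * y 3 + x 0 * y 0) * hdot
  have c12 : x 1 * y 2 - x 2 * y 1 = 0 := by
    have h1 : (x 1 * y 2 - x 2 * y 1)^2 = 0 := le_antisymm
      (by linarith [sq_nonneg (x 1 * y 3 - x 3 * y 1), sq_nonneg (x 2 * y 3 - x 3 * y 2)])
      (sq_nonneg _)
    exact pow_eq_zero_iff (by norm_num) |>.mp h1
  have c13 : x 1 * y 3 - x 3 * y 1 = 0 := by
    have h1 : (x 1 * y 3 - x 3 * y 1)^2 = 0 := le_antisymm
      (by linarith [sq_nonneg (x 1 * y 2 - x 2 * y 1), sq_nonneg (x 2 * y 3 - x 3 * y 2)])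
      (sq_nonneg _)
    exact pow_eq_zero_iff (by norm_num) |>.mp h1
  have c23 : x 2 * y 3 - x 3 * y 2 = 0 := by
    have h1 : (x 2 * y 3 - x 3 * y 2)^2 = 0 := le_antisymm
      (by linarith [sq_nonneg (x 1 * y 2 - x 2 * y 1), sq_nonneg (x 1 * y 3 - x 3 * y 1)])
      (sq_nonneg _)
    exact pow_eq_zero_iff (by norm_num) |>.mp h1
  refine ⟨y 0 / x 0, ?_⟩
  have e1 : x 0 * (x 0 * y 1 - x 1 * y 0) = 0 := by linear_combination y 1 * hxx - x 1 * hxy - x 2 * c12 - x 3 * c13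
  have e2 : x 0 * (x 0 * y 2 - x 2 * y 0) = 0 := by linear_combination y 2 * hxx - x 2 * hxy + x 1 * c12 - x 3 * c23
  have e3 : x 0 * (x 0 * y 3 - x 3 * y 0) = 0 := by linear_combination y 3 * hxx - x 3 * hxy + x 1 * c13 + x 2 * c23
  have f1 : x 0 * y 1 = x 1 * y 0 := by
    have := (mul_eq_zero.mp e1).resolve_left hx0; linarith
  have f2 : x 0 * y 2 = x 2 * y 0 := by
    have := (mul_eq_zero.mp e2).resolve_left hx0; linarith
  have f3 : x 0 * y 3 = x 3 * y 0 := by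
    have := (mul_eq_zero.mp e3).resolve_left hx0; linarith
  have p0 : y 0 = y 0 / x 0 * x 0 := by field_simp
  have p1 : y 1 = y 0 / x 0 * x 1 := by field_simp; linear_combination f1
  have p2 : y 2 = y 0 / x 0 * x 2 := by field_simp; linear_combination f2
  have p3 : y 3 = y 0 / x 0 * x 3 := by field_simp; linear_combination f3
  funext i
  simp only [Pi.smul_apply, smul_eq_mul]
  fin_cases i
  · exact p0
  · exact p1
  · exact p2
  · exact p3

/-- If a nonzero null vector is a combination of two other nonzero null vectors,
then two of the three are proportional. -/
lemma combo_case (x y z : Fin 4 → ℝ) (hx : x ≠ 0) (hy : y ≠ 0) (hz : z ≠ 0)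
    (hxx : minkowski x x = 0) (hyy : minkowski y y = 0) (hzz : minkowski z z = 0)
    (α β : ℝ) (h : z = α • x + β • y) :
    (∃ c : ℝ, x = c • y) ∨ (∃ c : ℝ, x = c • z) ∨ (∃ c : ℝ, y = c • z) := by
  have key : α * (β * minkowski x y) = 0 := by
    have hz2 := hzz
    rw [h] at hz2
    simp only [minkowski, Pi.add_apply, Pi.smul_apply, smul_eq_mul] at hz2 hxx hyy ⊢
    linear_combination (1/2) * hz2 - (α^2/2) * hxx - (β^2/2) * hyy
  rcases mul_eq_zero.mp key with hα | h0
  · -- z = β • y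
    have hβ : β ≠ 0 := by
      intro hβ
      apply hz
      rw [h, hα, hβ, zero_smul, zero_smul, add_zero]
    refine Or.inr (Or.inr ⟨β⁻¹, ?_⟩)
    rw [h, hα, zero_smul, zero_add, smul_smul, inv_mul_cancel₀ hβ, one_smul]
  rcases mul_eq_zero.mp h0 with hβ | hm
  · have hα : α ≠ 0 := by
      intro hα
      apply hz
      rw [h, hα, hβ, zero_smul, zero_smul, add_zero]
    refine Or.inr (Or.inl ⟨α⁻¹, ?_⟩)
    rw [h, hβ, zero_smul, add_zero, smul_smul, inv_mul_cancel₀ hα, one_smul]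
  · obtain ⟨t, ht⟩ := null_orth x y hx hxx hyy hm
    have ht0 : t ≠ 0 := by
      intro h0
      apply hy
      rw [ht, h0, zero_smul]
    exact Or.inl ⟨t⁻¹, by rw [ht, smul_smul, inv_mul_cancel₀ ht0, one_smul]⟩

/-- Three nonzero null vectors of Minkowski space ℝ⁴ are linearly dependent
iff two of them are proportional; in particular three pairwise non-proportional null
vectors are linearly independent. -/
theorem stmt_4 (u v w : Fin 4 → ℝ)
    (hu : u ≠ 0) (hv : v ≠ 0) (hw : w ≠ 0)
    (huu : minkowski u u = 0) (hvv : minkowski v v = 0) (hww : minkowski w w = 0) :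
    (¬ LinearIndependent ℝ ![u, v, w] ↔
      (∃ c : ℝ, u = c • v) ∨ (∃ c : ℝ, u = c • w) ∨ (∃ c : ℝ, v = c • w))
    ∧ (((∀ c : ℝ, u ≠ c • v) ∧ (∀ c : ℝ, u ≠ c • w) ∧ (∀ c : ℝ, v ≠ c • w)) →
        LinearIndependent ℝ ![u, v, w]) := by
  have main : ¬ LinearIndependent ℝ ![u, v, w] ↔
      (∃ c : ℝ, u = c • v) ∨ (∃ c : ℝ, u = c • w) ∨ (∃ c : ℝ, v = c • w) := by
    constructor
    · intro h
      rw [Fintype.not_linearIndependent_iff] at h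
      obtain ⟨g, hsum, i, hi⟩ := h
      rw [Fin.sum_univ_three] at hsum
      simp only [Matrix.cons_val_zero, Matrix.cons_val_one, Matrix.head_cons,
        Matrix.cons_val_two, Matrix.tail_cons] at hsum
      by_cases h2 : g 2 ≠ 0
      · have hw' : w = (-(g 0) / g 2) • u + (-(g 1) / g 2) • v := by
          funext j
          have := congrFun hsum j
          simp only [Pi.add_apply, Pi.smul_apply, smul_eq_mul, Pi.zero_apply] at this ⊢
          field_simp
          linear_combination this
        exact combo_case u v w hu hv hw huu hvv hww _ _ hw'
      push_neg at h2
      by_cases h1 : g 1 ≠ 0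
      · have hv' : v = (-(g 0) / g 1) • u + (0 : ℝ) • w := by
          funext j
          have := congrFun hsum j
          simp only [Pi.add_apply, Pi.smul_apply, smul_eq_mul, Pi.zero_apply, h2] at this ⊢
          field_simp
          linear_combination this
        rcases combo_case u w v hu hw hv huu hww hvv _ _ hv' with h | h | h
        · exact Or.inr (Or.inl h)
        · exact Or.inl h
        · obtain ⟨c, hc⟩ := h
          have hc0 : c ≠ 0 := by
            intro h0
            apply hw
            rw [hc, h0, zero_smul]
          exact Or.inr (Or.inr ⟨c⁻¹, by rw [hc, smul_smul, inv_mul_cancel₀ hc0, one_smul]⟩)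
      · push_neg at h1
        have h0 : g 0 ≠ 0 := by
          fin_cases i
          · exact hi
          · exact absurd h1 hi
          · exact absurd h2 hi
        exfalso
        apply hu
        funext j
        have := congrFun hsum j
        simp only [Pi.add_apply, Pi.smul_apply, smul_eq_mul, Pi.zero_apply, h1, h2,
          zero_mul, add_zero] at this
        have := mul_eq_zero.mp this
        simpa [h0] using this
    · rintro (⟨c, hc⟩ | ⟨c, hc⟩ | ⟨c, hc⟩) <;> rw [Fintype.not_linearIndependent_iff]
      · refine ⟨![1, -c, 0], ?_, 0, by norm_num⟩
        rw [Fin.sum_univ_three]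
        simp [hc]
      · refine ⟨![1, 0, -c], ?_, 0, by norm_num⟩
        rw [Fin.sum_univ_three]
        simp [hc]
      · refine ⟨![0, 1, -c], ?_, 1, by norm_num⟩
        rw [Fin.sum_univ_three]
        simp [hc]
  refine ⟨main, ?_⟩
  rintro ⟨n1, n2, n3⟩
  by_contra hLI
  rcases main.mp hLI with ⟨c, hc⟩ | ⟨c, hc⟩ | ⟨c, hc⟩
  · exact n1 c hc
  · exact n2 c hc
  · exact n3 c hc
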